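/- Let F be a real quadratic field with real embeddings σ, σ' and discriminant Δ_F, and let I be a reduced fractional ideal of F written as I = ℤ·1 + ℤ·f where f ∈ F satisfies σ(f) > 1 and −1 < σ'(f) < 0. If N(f − 1/2) ≤ −3/4 (i.e. σ(f − 1/2)·σ'(f − 1/2) ≤ −3/4), then I is 1-reduced. -/

import Mathlib

open NumberField
open scoped nonZeroDivisors

/-- The `u`-length of an element `g` of a real quadratic field with real embeddings `σ, σ'`:
`‖g‖_u = √(u₁²·σ(g)² + u₂²·σ'(g)²)`. -/
noncomputable def normU {F : Type*} [Field F] (σ σ' : F →+* ℝ) (u₁ u₂ : ℝ) (g : F) : ℝ :=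
  Real.sqrt (u₁ ^ 2 * (σ g) ^ 2 + u₂ ^ 2 * (σ' g) ^ 2)

/-- A fractional ideal `I` is reduced if `1 ∈ I` and the only `g ∈ I` with `|σ g| < 1` and
`|σ' g| < 1` is `g = 0`. -/
def IsReducedIdeal {F : Type*} [Field F] [NumberField F] (σ σ' : F →+* ℝ)
    (I : FractionalIdeal (𝓞 F)⁰ F) : Prop :=
  (1 : F) ∈ I ∧ ∀ g ∈ I, |σ g| < 1 → |σ' g| < 1 → g = 0

/-- `1` is primitive in `I`: `1 ∈ I` and no `1/d ∈ I` for an integer `d ≥ 2`. -/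
def IsOnePrimitive {F : Type*} [Field F] [NumberField F]
    (I : FractionalIdeal (𝓞 F)⁰ F) : Prop :=
  (1 : F) ∈ I ∧ ∀ d : ℕ, 2 ≤ d → ((d : F))⁻¹ ∉ I

/-- `I` is 1-reduced: `1` is primitive in `I` and for some metric `u = (u₁, u₂)` of positive
reals, `1` is a shortest nonzero vector of `I` with respect to `‖·‖_u`. -/
def IsOneReduced {F : Type*} [Field F] [NumberField F] (σ σ' : F →+* ℝ)
    (I : FractionalIdeal (𝓞 F)⁰ F) : Prop :=
  IsOnePrimitive I ∧ ∃ u₁ u₂ : ℝ, 0 < u₁ ∧ 0 < u₂ ∧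
    ∀ g ∈ I, g ≠ 0 → normU σ σ' u₁ u₂ 1 ≤ normU σ σ' u₁ u₂ g

/-- Product of consecutive integers is nonnegative. -/
lemma consec_nonneg (m : ℤ) : 0 ≤ m * (m + 1) := by
  rcases le_or_gt 0 m with h | h
  · exact mul_nonneg h (by omega)
  · have := mul_nonneg (by omega : (0:ℤ) ≤ -m) (by omega : (0:ℤ) ≤ -(m + 1))
    nlinarith

/-- Key arithmetic inequality: for `K ≥ 2` and integers `(m,n) ≠ (0,0)`,
`2m² + 2mn + Kn² ≥ 2`. -/
lemma key_ineq (K : ℝ) (hK : 2 ≤ K) (m n : ℤ) (h : m ≠ 0 ∨ n ≠ 0) :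
    2 ≤ 2 * (m:ℝ)^2 + 2 * (m:ℝ) * (n:ℝ) + K * (n:ℝ)^2 := by
  rcases eq_or_ne n 0 with hn | hn
  · subst hn
    have hm : m ≠ 0 := h.resolve_right (by simp)
    have h1 : 1 ≤ |m| := Int.one_le_abs hm
    have h2 : (1:ℤ) ≤ m ^ 2 := by nlinarith [sq_abs m]
    have h3 : (1:ℝ) ≤ (m:ℝ)^2 := by exact_mod_cast h2
    push_cast
    nlinarith
  · rcases eq_or_ne n 1 with h1 | h1
    · subst h1
      have h2 : (0:ℤ) ≤ m * (m + 1) := consec_nonneg m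
      have h3 : (0:ℝ) ≤ (m:ℝ) * ((m:ℝ) + 1) := by exact_mod_cast h2
      push_cast
      nlinarith
    · rcases eq_or_ne n (-1) with h2 | h2
      · subst h2
        have h3 : (0:ℤ) ≤ (m - 1) * m := by nlinarith [consec_nonneg (m - 1)]
        have h4 : (0:ℝ) ≤ ((m:ℝ) - 1) * (m:ℝ) := by exact_mod_cast h3
        push_cast
        nlinarith
      · have h6 : (4:ℤ) ≤ n ^ 2 := by
          rcases (by omega : 2 ≤ n ∨ n ≤ -2) with h5 | h5 <;> nlinarith
        have h7 : (4:ℝ) ≤ (n:ℝ)^2 := by exact_mod_cast h6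
        nlinarith [sq_nonneg ((m:ℝ) + (n:ℝ)/2)]

/-- Theorem 1.1: a reduced ideal `I = ℤ + ℤf` of a real quadratic field with `σ f > 1` and
`-1 < σ' f < 0` is 1-reduced provided `N(f - 1/2) ≤ -3/4`. -/
theorem reduced_is_oneReduced_of_norm_le {F : Type*} [Field F] [NumberField F]
    (hdeg : Module.finrank ℚ F = 2)
    (σ σ' : F →+* ℝ) (hσ : σ ≠ σ')
    (I : FractionalIdeal (𝓞 F)⁰ F) (f : F)
    (hI : ∀ x : F, x ∈ I ↔ ∃ m n : ℤ, x = (m : F) + (n : F) * f)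
    (hred : IsReducedIdeal σ σ' I)
    (hf1 : 1 < σ f) (hf2 : -1 < σ' f) (hf3 : σ' f < 0)
    (hN : σ (f - 1/2) * σ' (f - 1/2) ≤ -3/4) :
    IsOneReduced σ σ' I := by
  set a := σ f with ha
  set b := σ' f with hb
  have hab : b < a := by linarith
  -- the norm hypothesis, rewritten
  have hNab : (a - 1/2) * (b - 1/2) ≤ -3/4 := by
    have e1 : σ (f - 1/2) = a - 1/2 := by
      simp [map_sub, map_div₀, map_ofNat]
      rfl
    have e2 : σ' (f - 1/2) = b - 1/2 := by
      simp [map_sub, map_div₀, map_ofNat]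
      rfl
    rw [e1, e2] at hN
    exact hN
  have hK : 2 ≤ a + b - 2 * a * b := by nlinarith
  have hone : (1 : F) ∈ I := by
    rw [hI]
    exact ⟨1, 0, by push_cast; ring⟩
  constructor
  · refine ⟨hone, fun d hd hmem => ?_⟩
    rw [hI] at hmem
    obtain ⟨m, n, hx⟩ := hmem
    have hd0 : (0:ℝ) < (d:ℝ) := by positivity
    have e1 : ((d:ℝ))⁻¹ = (m:ℝ) + (n:ℝ) * a := by
      have := congrArg σ hx
      simpa [map_inv₀] using this
    have e2 : ((d:ℝ))⁻¹ = (m:ℝ) + (n:ℝ) * b := by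
      have := congrArg σ' hx
      simpa [map_inv₀] using this
    have hn0 : (n:ℝ) = 0 := by
      by_contra hn
      have : (n:ℝ) * (a - b) = 0 := by linarith
      rcases mul_eq_zero.1 this with h | h
      · exact hn h
      · linarith
    have hm : ((d:ℝ))⁻¹ = (m:ℝ) := by rw [e1, hn0]; ring
    have hd2 : (2:ℝ) ≤ (d:ℝ) := by exact_mod_cast hd
    have h1 : (0:ℝ) < (m:ℝ) := by
      rw [← hm]; positivity
    have h2 : (m:ℝ) < 1 := by
      rw [← hm]
      rw [inv_lt_one_iff₀]
      right; linarith
    have h3 : 0 < m := by exact_mod_cast h1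
    have h4 : m < 1 := by exact_mod_cast h2
    omega
  · refine ⟨Real.sqrt (1 - 2*b), Real.sqrt (2*a - 1), Real.sqrt_pos.2 (by linarith),
      Real.sqrt_pos.2 (by linarith), fun g hg hg0 => ?_⟩
    rw [hI] at hg
    obtain ⟨m, n, hx⟩ := hg
    have hmn : m ≠ 0 ∨ n ≠ 0 := by
      by_contra h
      push_neg at h
      apply hg0
      rw [hx, h.1, h.2]
      push_cast
      ring
    have hu1 : (Real.sqrt (1 - 2*b)) ^ 2 = 1 - 2*b := Real.sq_sqrt (by linarith)
    have hu2 : (Real.sqrt (2*a - 1)) ^ 2 = 2*a - 1 := Real.sq_sqrt (by linarith)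
    have e1 : σ g = (m:ℝ) + (n:ℝ) * a := by
      have := congrArg σ hx
      simpa using this
    have e2 : σ' g = (m:ℝ) + (n:ℝ) * b := by
      have := congrArg σ' hx
      simpa using this
    unfold normU
    apply Real.sqrt_le_sqrt
    rw [map_one, map_one, hu1, hu2, e1, e2]
    have key := key_ineq (a + b - 2*a*b) hK m n hmn
    have expand : (1 - 2*b) * ((m:ℝ) + (n:ℝ)*a)^2 + (2*a - 1) * ((m:ℝ) + (n:ℝ)*b)^2
        = (a - b) * (2*(m:ℝ)^2 + 2*(m:ℝ)*(n:ℝ) + (a + b - 2*a*b)*(n:ℝ)^2) := by ring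
    nlinarith [mul_le_mul_of_nonneg_left key (by linarith : (0:ℝ) ≤ a - b)]
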